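/- (Theorem 1, forward direction trivially and backward direction substantively.) In the composed transition system of an MPI program with only synchronous sends, source-specific receives, and barriers, for every execution in the full state graph G from the initial global state σ₀ to a deadlocked global state σ, there is an execution of the same length from σ₀ to σ in the on-the-fly reduced graph G̃ (which keeps from each state only the transition of minimal weight); and conversely. -/
import Mathlib


/-- Local actions of an MPI process: synchronous send to a destination,
receive from a specific source, or barrier. -/
inductive MAct (n : ℕ) where
  | send (dest : Fin n)
  | recv (src : Fin n)
  | barrier
deriving DecidableEq

/-- Global actions of the parallel composition: `B` (barrier synchronizing all
processes) and `SR i j` (matched synchronous send from process `i` to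
process `j`). -/
inductive GAct (n : ℕ) where
  | B
  | SR (i j : Fin n)
deriving DecidableEq

variable {n : ℕ} {L : Fin n → Type}

/-- A global action is enabled in the global state `σ` (an `n`-tuple of local
states): `B` iff every process's unique next local action is `barrier`;
`SR i j` iff `i ≠ j`, process `i`'s next action is a send to `j` and process
`j`'s next action is a receive from `i`. Here `next i` gives the unique next
local action of deterministic process `i` (`none` = terminated). -/
def GEnabled (next : ∀ i, L i → Option (MAct n)) (σ : ∀ i, L i) : GAct n → Prop
  | .B => ∀ i, next i (σ i) = some .barrier
  | .SR i j => i ≠ j ∧ next i (σ i) = some (.send j) ∧ next j (σ j) = some (.recv i)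

open scoped Classical in
/-- The global step function: `B` advances all components (via the local
advance functions `adv`), `SR i j` advances exactly components `i` and `j`. -/
noncomputable def gstep (next : ∀ i, L i → Option (MAct n)) (adv : ∀ i, L i → L i) :
    GAct n → (∀ i, L i) → Option (∀ i, L i)
  | .B, σ => if GEnabled next σ .B then some (fun k => adv k (σ k)) else none
  | .SR i j, σ =>
      if GEnabled next σ (.SR i j) then
        some (Function.update (Function.update σ i (adv i (σ i))) j (adv j (σ j)))
      else none

/-- The weight of a global action: `B` gets the least weight, and an `SR`
action gets a weight determined by the smaller index of the two processes
it advances (the designated scheduled process). -/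
def weight : GAct n → ℕ
  | .B => 1
  | .SR i j => 2 + min i.val j.val

/-- Executions in the full state graph `G`, labeled by their action lists. -/
inductive GRun (next : ∀ i, L i → Option (MAct n)) (adv : ∀ i, L i → L i) :
    List (GAct n) → (∀ i, L i) → (∀ i, L i) → Prop
  | nil (σ : ∀ i, L i) : GRun next adv [] σ σ
  | cons {g : GAct n} {l : List (GAct n)} {σ σ' τ : ∀ i, L i} :
      gstep next adv g σ = some σ' → GRun next adv l σ' τ → GRun next adv (g :: l) σ τ

/-- Executions in the on-the-fly reduced graph `G̃`, which keeps from each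
state only the transition whose action has minimal weight among the enabled
actions. -/
inductive RRun (next : ∀ i, L i → Option (MAct n)) (adv : ∀ i, L i → L i) :
    List (GAct n) → (∀ i, L i) → (∀ i, L i) → Prop
  | nil (σ : ∀ i, L i) : RRun next adv [] σ σ
  | cons {g : GAct n} {l : List (GAct n)} {σ σ' τ : ∀ i, L i} :
      (∀ g' : GAct n, GEnabled next σ g' → weight g ≤ weight g') →
      gstep next adv g σ = some σ' → RRun next adv l σ' τ → RRun next adv (g :: l) σ τ

/-- A deadlocked global state: no global action is enabled, but at least one
process has not terminated. -/
def Deadlocked (next : ∀ i, L i → Option (MAct n)) (σ : ∀ i, L i) : Prop :=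
  (∀ g : GAct n, ¬ GEnabled next σ g) ∧ ∃ i : Fin n, (next i (σ i)).isSome

section Aux

variable (next : ∀ i, L i → Option (MAct n)) (adv : ∀ i, L i → L i)

lemma gstep_enabled {g : GAct n} {σ σ' : ∀ i, L i}
    (h : gstep next adv g σ = some σ') : GEnabled next σ g := by
  cases g <;> · simp only [gstep] at h
                split at h
                · assumption
                · simp at h

lemma weight_pos (g : GAct n) : 1 ≤ weight g := by
  cases g <;> simp [weight] <;> omega

lemma B_not_SR {σ : ∀ i, L i} (hB : GEnabled next σ .B) {i j : Fin n}
    (hSR : GEnabled next σ (.SR i j)) : False := by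
  have h1 := hB i
  have h2 := hSR.2.1
  rw [h1] at h2
  simp at h2

lemma sr_disjoint {σ : ∀ i, L i} {i j a b : Fin n}
    (h1 : GEnabled next σ (.SR i j)) (h2 : GEnabled next σ (.SR a b))
    (hne : (GAct.SR a b : GAct n) ≠ .SR i j) :
    a ≠ i ∧ a ≠ j ∧ b ≠ i ∧ b ≠ j := by
  obtain ⟨hij, hsi, hrj⟩ := h1
  obtain ⟨hab, hsa, hrb⟩ := h2
  refine ⟨?_, ?_, ?_, ?_⟩ <;> rintro rfl
  · rw [hsi] at hsa; simp at hsa; exact hne (by rw [hsa])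
  · rw [hrj] at hsa; simp at hsa
  · rw [hsi] at hrb; simp at hrb
  · rw [hrj] at hrb; simp at hrb; exact hne (by rw [hrb])

lemma gstep_sr_eq {σ σ1 : ∀ i, L i} {a b : Fin n}
    (hstep : gstep next adv (.SR a b) σ = some σ1) :
    σ1 = Function.update (Function.update σ a (adv a (σ a))) b (adv b (σ b)) := by
  simp only [gstep] at hstep
  split at hstep
  · exact (Option.some_inj.mp hstep).symm
  · simp at hstep

lemma sr_pres {σ σ1 : ∀ i, L i} {i j a b : Fin n}
    (hij : GEnabled next σ (.SR i j))
    (hd : a ≠ i ∧ a ≠ j ∧ b ≠ i ∧ b ≠ j)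
    (hstep : gstep next adv (.SR a b) σ = some σ1) :
    GEnabled next σ1 (.SR i j) := by
  obtain ⟨hai, haj, hbi, hbj⟩ := hd
  have h := gstep_sr_eq next adv hstep
  subst h
  obtain ⟨h1, h2, h3⟩ := hij
  refine ⟨h1, ?_, ?_⟩
  · rw [Function.update_of_ne (Ne.symm hbi), Function.update_of_ne (Ne.symm hai)]
    exact h2
  · rw [Function.update_of_ne (Ne.symm hbj), Function.update_of_ne (Ne.symm haj)]
    exact h3

lemma sr_commute {σ σ1 : ∀ i, L i} {i j a b : Fin n}
    (hij : GEnabled next σ (.SR i j))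
    (hd : a ≠ i ∧ a ≠ j ∧ b ≠ i ∧ b ≠ j)
    (hstep : gstep next adv (.SR a b) σ = some σ1) :
    ∃ σ' σ2, gstep next adv (.SR i j) σ = some σ' ∧
      gstep next adv (.SR a b) σ' = some σ2 ∧
      gstep next adv (.SR i j) σ1 = some σ2 := by
  classical
  obtain ⟨hai, haj, hbi, hbj⟩ := hd
  have hab : GEnabled next σ (.SR a b) := gstep_enabled next adv hstep
  have h1ij : GEnabled next σ1 (.SR i j) :=
    sr_pres next adv hij ⟨hai, haj, hbi, hbj⟩ hstep
  have hσ1 := gstep_sr_eq next adv hstep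
  set σ' := Function.update (Function.update σ i (adv i (σ i))) j (adv j (σ j)) with hσ'
  have h'ab : GEnabled next σ' (.SR a b) := by
    obtain ⟨h1, h2, h3⟩ := hab
    refine ⟨h1, ?_, ?_⟩
    · rw [hσ', Function.update_of_ne haj, Function.update_of_ne hai]; exact h2
    · rw [hσ', Function.update_of_ne hbj, Function.update_of_ne hbi]; exact h3
  have h2 : gstep next adv (.SR a b) σ' =
      some (Function.update (Function.update σ' a (adv a (σ' a))) b (adv b (σ' b))) := by
    simp only [gstep]; rw [if_pos h'ab]
  refine ⟨σ', _, ?_, h2, ?_⟩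
  · simp only [gstep]; rw [if_pos hij]
  · simp only [gstep]; rw [if_pos h1ij]
    congr 1
    subst hσ1
    have ne1 : i ≠ j := hij.1
    have ne2 : a ≠ b := hab.1
    funext k
    by_cases hk1 : k = a
    · subst hk1
      simp [hσ', Function.update, hai, haj, Ne.symm hai, Ne.symm haj, ne2, Ne.symm ne2]
    · by_cases hk2 : k = b
      · subst hk2
        simp [hσ', Function.update, hbi, hbj, Ne.symm hbi, Ne.symm hbj, ne2, Ne.symm ne2]
      · by_cases hk3 : k = i
        · subst hk3
          simp [hσ', Function.update, hk1, hk2, hai, hbi, Ne.symm hai, Ne.symm hbi,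
            ne1, Ne.symm ne1]
        · by_cases hk4 : k = j
          · subst hk4
            simp [hσ', Function.update, hk1, hk2, haj, hbj, Ne.symm haj, Ne.symm hbj]
          · simp [hσ', Function.update, hk1, hk2, hk3, hk4]

lemma persist {i j : Fin n} :
    ∀ {l : List (GAct n)} {σ0 τ : ∀ i, L i}, GRun next adv l σ0 τ →
      (∀ a ∈ l, a ≠ GAct.SR i j) → GEnabled next σ0 (.SR i j) →
      GEnabled next τ (.SR i j) := by
  intro l σ0 τ hrun
  induction hrun with
  | nil => intro _ h; exact h
  | @cons g l σ0 σ1 τ hstep hrun ih =>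
    intro hmem hen
    have hg : GEnabled next σ0 g := gstep_enabled next adv hstep
    cases g with
    | B => exact absurd hen (fun h => B_not_SR next hg h)
    | SR a b =>
      have hne : (GAct.SR a b : GAct n) ≠ .SR i j := hmem _ (by simp)
      have hd := sr_disjoint next hen hg hne
      exact ih (fun x hx => hmem x (by simp [hx])) (sr_pres next adv hen hd hstep)

lemma pull {i j : Fin n} :
    ∀ {l : List (GAct n)} {σ0 τ : ∀ i, L i}, GRun next adv l σ0 τ →
      ∀ {τ' : ∀ i, L i}, (∀ a ∈ l, a ≠ GAct.SR i j) → GEnabled next σ0 (.SR i j) →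
      gstep next adv (.SR i j) τ = some τ' →
      ∃ σ0', gstep next adv (.SR i j) σ0 = some σ0' ∧ GRun next adv l σ0' τ' := by
  intro l σ0 τ hrun
  induction hrun with
  | nil => intro τ' _ _ hst; exact ⟨τ', hst, GRun.nil τ'⟩
  | @cons g l σ0 σ1 τ hstep hrun ih =>
    intro τ' hmem hen hst
    have hg : GEnabled next σ0 g := gstep_enabled next adv hstep
    cases g with
    | B => exact absurd hen (fun h => B_not_SR next hg h)
    | SR a b =>
      have hne : (GAct.SR a b : GAct n) ≠ .SR i j := hmem _ (by simp)
      have hd := sr_disjoint next hen hg hne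
      have hen1 : GEnabled next σ1 (.SR i j) := sr_pres next adv hen hd hstep
      obtain ⟨σ1', hst1, hrun1⟩ := ih (fun x hx => hmem x (by simp [hx])) hen1 hst
      obtain ⟨σ0', σ2, ha, hb, hc⟩ := sr_commute next adv hen hd hstep
      rw [hst1] at hc
      have : σ2 = σ1' := Option.some_inj.mp hc.symm
      subst this
      exact ⟨σ0', ha, GRun.cons hb hrun1⟩

lemma grun_append : ∀ {l1 l2 : List (GAct n)} {σ0 mid τ : ∀ i, L i},
    GRun next adv l1 σ0 mid → GRun next adv l2 mid τ →
    GRun next adv (l1 ++ l2) σ0 τ := by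
  intro l1 l2 σ0 mid τ h1
  induction h1 with
  | nil => intro h; exact h
  | cons hstep _ ih => intro h; exact GRun.cons hstep (ih h)

lemma grun_split : ∀ (l1 : List (GAct n)) {l2 : List (GAct n)} {σ0 τ : ∀ i, L i},
    GRun next adv (l1 ++ l2) σ0 τ →
    ∃ mid, GRun next adv l1 σ0 mid ∧ GRun next adv l2 mid τ := by
  intro l1
  induction l1 with
  | nil => intro l2 σ0 τ h; exact ⟨σ0, GRun.nil σ0, h⟩
  | cons g l1 ih =>
    intro l2 σ0 τ h
    cases h with
    | cons hstep hrun =>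
      obtain ⟨mid, h1, h2⟩ := ih hrun
      exact ⟨mid, GRun.cons hstep h1, h2⟩

lemma first_occ {α : Type*} {a : α} : ∀ {l : List α}, a ∈ l →
    ∃ s t, l = s ++ a :: t ∧ a ∉ s := by
  classical
  intro l
  induction l with
  | nil => intro h; simp at h
  | cons b l ih =>
    intro h
    by_cases hb : b = a
    · exact ⟨[], l, by simp [hb], by simp⟩
    · have : a ∈ l := by
        rcases List.mem_cons.mp h with h | h
        · exact absurd h.symm hb
        · exact h
      obtain ⟨s, t, hst, hns⟩ := ih this
      exact ⟨b :: s, t, by simp [hst], by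
        simp only [List.mem_cons, not_or]
        exact ⟨fun h => hb h.symm, hns⟩⟩

lemma rrun_grun : ∀ {l : List (GAct n)} {σ0 τ : ∀ i, L i},
    RRun next adv l σ0 τ → GRun next adv l σ0 τ := by
  intro l σ0 τ h
  induction h with
  | nil σ => exact GRun.nil σ
  | cons _ hstep _ ih => exact GRun.cons hstep ih

lemma main_ind (σ : ∀ i, L i) (hdead : Deadlocked next σ) :
    ∀ (m : ℕ) (l : List (GAct n)), l.length ≤ m → ∀ σ0, GRun next adv l σ0 σ →
      ∃ l', l'.length = l.length ∧ RRun next adv l' σ0 σ := by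
  intro m
  induction m with
  | zero =>
    intro l hl σ0 hr
    have : l = [] := List.length_eq_zero_iff.mp (Nat.le_zero.mp hl)
    subst this
    cases hr
    exact ⟨[], rfl, RRun.nil σ⟩
  | succ m ih =>
    intro l hl σ0 hr
    cases hr with
    | nil => exact ⟨[], rfl, RRun.nil σ⟩
    | @cons g0 rest _ σ1 _ hstep hrun =>
      have hg0 : GEnabled next σ0 g0 := gstep_enabled next adv hstep
      by_cases hB : GEnabled next σ0 GAct.B
      · -- g0 must be B
        have hg0B : g0 = GAct.B := by
          cases g0 with
          | B => rfl
          | SR a b => exact absurd (B_not_SR next hB hg0) id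
        subst hg0B
        obtain ⟨l'', hlen, hrr⟩ := ih rest (by simpa using Nat.succ_le_succ_iff.mp hl) σ1 hrun
        exact ⟨GAct.B :: l'', by simp [hlen], RRun.cons
          (fun g' _ => weight_pos g') hstep hrr⟩
      · -- choose minimal-weight enabled action, an SR
        have hWne : {w : ℕ | ∃ g : GAct n, GEnabled next σ0 g ∧ weight g = w}.Nonempty :=
          ⟨weight g0, g0, hg0, rfl⟩
        obtain ⟨gm, hgmen, hgmw⟩ := Nat.sInf_mem hWne
        have hmin : ∀ g' : GAct n, GEnabled next σ0 g' → weight gm ≤ weight g' := by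
          intro g' hg'
          rw [hgmw]
          exact Nat.sInf_le ⟨g', hg', rfl⟩
        obtain ⟨i, j, rfl⟩ : ∃ i j : Fin n, gm = GAct.SR i j := by
          cases gm with
          | B => exact absurd hgmen hB
          | SR i j => exact ⟨i, j, rfl⟩
        have hfull : GRun next adv (g0 :: rest) σ0 σ := GRun.cons hstep hrun
        have hmem : (GAct.SR i j : GAct n) ∈ g0 :: rest := by
          by_contra hnot
          exact hdead.1 _ (persist next adv hfull
            (fun a ha h => hnot (h ▸ ha)) hgmen)
        obtain ⟨l1, l2, hsplit, hnl1⟩ := first_occ hmem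
        rw [hsplit] at hfull
        obtain ⟨mid, hrun1, hrun2⟩ := grun_split next adv l1 hfull
        cases hrun2 with
        | @cons _ _ _ mid' _ hstepm hrun2 =>
          obtain ⟨σ0', hstep0, hrun1'⟩ := pull next adv hrun1
            (fun a ha h => hnl1 (h ▸ ha)) hgmen hstepm
          have hcomb : GRun next adv (l1 ++ l2) σ0' σ := grun_append next adv hrun1' hrun2
          have hlen2 : (l1 ++ l2).length ≤ m := by
            have := hl
            rw [hsplit] at this
            simp at this ⊢
            omega
          obtain ⟨l'', hlen'', hrr⟩ := ih (l1 ++ l2) hlen2 σ0' hcomb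
          refine ⟨GAct.SR i j :: l'', ?_, RRun.cons hmin hstep0 hrr⟩
          rw [hsplit]
          simp at hlen'' ⊢
          omega

end Aux

/-- Theorem 1: in the composed transition system of an MPI
program with synchronous sends, source-specific receives and barriers (with an
acyclic state graph), for every execution in the full state graph from `σ₀` to
a deadlocked state `σ` there is an execution of the same length from `σ₀` to
`σ` in the on-the-fly reduced graph, and conversely every reduced execution is
an execution of the full graph. -/
theorem stmt12 (next : ∀ i, L i → Option (MAct n)) (adv : ∀ i, L i → L i)
    (hacyc : ∀ (σ : ∀ i, L i) (l : List (GAct n)), l ≠ [] → GRun next adv l σ σ → False)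
    (σ0 σ : ∀ i, L i) (hdead : Deadlocked next σ) (l : List (GAct n)) :
    (GRun next adv l σ0 σ →
      ∃ l' : List (GAct n), l'.length = l.length ∧ RRun next adv l' σ0 σ) ∧
    (RRun next adv l σ0 σ → GRun next adv l σ0 σ) := by
  constructor
  · intro h
    exact main_ind next adv σ hdead l.length l le_rfl σ0 h
  · exact rrun_grun next adv
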